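/- In the setting of minimum-cost reachability with non-negative costs, there exists a memoryless strategy σ that is optimal: for every state s, the supremum over σ-compatible runs from s of the cost up to the first visit of T equals MinReach_T(s). -/

import Mathlib

open scoped Classical NNReal ENat

noncomputable section

/-- A consumption Markov decision process. -/
structure CMDP (S A : Type) [Fintype S] where
  Δ : S → A → S → NNReal
  Δ_sum : ∀ s a, (∑ t, Δ s a t) = 1
  C : S → A → ℕ
  R : Set S
  cap : ℕ

namespace CMDP

variable {S A : Type} [Fintype S]

/-- Strategies map histories (initial state, list of action/state steps) to actions. -/
abbrev Strat (S A : Type) : Type := S × List (A × S) → A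

/-- Last state of a history. -/
def lastState (s : S) : List (A × S) → S
  | [] => s
  | (_, t) :: rest => lastState t rest

/-- The `i`-th state (0-indexed) of a history. -/
def stateAt (s : S) (steps : List (A × S)) (i : ℕ) : S :=
  (s :: steps.map Prod.snd).getD i s

variable (M : CMDP S A)

def Succ (s : S) (a : A) : Set S := {t | 0 < M.Δ s a t}

/-- Total consumption along a finite path. -/
def consAux : S → List (A × S) → ℕ
  | _, [] => 0
  | s, (a, t) :: rest => M.C s a + consAux t rest

/-- One step of the energy-level update. -/
def levelStep (s : S) (a : A) (l : ℕ) : Option ℕ :=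
  if s ∈ M.R then (if M.C s a ≤ M.cap then some (M.cap - M.C s a) else none)
  else (if M.C s a ≤ l then some (l - M.C s a) else none)

def energyFrom : Option ℕ → S → List (A × S) → Option ℕ
  | none, _, _ => none
  | some l, _, [] => some l
  | some l, s, (a, t) :: rest => energyFrom (M.levelStep s a l) t rest

/-- Energy level of a history initialized by `d` (`none` = ⊥, exhaustion). -/
def energy (d : ℕ) (s : S) (steps : List (A × S)) : Option ℕ :=
  M.energyFrom (some d) s steps

/-- Validity of a finite path. -/
def ValidPath : S → List (A × S) → Prop
  | _, [] => True
  | s, (a, t) :: rest => t ∈ M.Succ s a ∧ ValidPath t rest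

/-- First state of a run. -/
def runState (ρ : ℕ → S × A) (i : ℕ) : S := (ρ i).1

/-- The finite prefix of a run with `i` steps. -/
def prefixSteps (ρ : ℕ → S × A) (i : ℕ) : List (A × S) :=
  (List.range i).map fun k => ((ρ k).2, (ρ (k + 1)).1)

def IsRun (ρ : ℕ → S × A) : Prop := ∀ i, (ρ (i + 1)).1 ∈ M.Succ (ρ i).1 (ρ i).2

/-- A run is `d`-safe if the energy level of every finite prefix is defined. -/
def DSafe (d : ℕ) (ρ : ℕ → S × A) : Prop :=
  ∀ i, M.energy d (runState ρ 0) (prefixSteps ρ i) ≠ none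

/-- A run is compatible with a strategy. -/
def Compat (σ : Strat S A) (ρ : ℕ → S × A) : Prop :=
  M.IsRun ρ ∧ ∀ i, (ρ i).2 = σ (runState ρ 0, prefixSteps ρ i)

def CompatFrom (σ : Strat S A) (s : S) (ρ : ℕ → S × A) : Prop :=
  M.Compat σ ρ ∧ runState ρ 0 = s

/-- A strategy is `d`-safe in `s` if all compatible runs from `s` are `d`-safe. -/
def SafeStrat (σ : Strat S A) (d : ℕ) (s : S) : Prop :=
  ∀ ρ, M.CompatFrom σ s ρ → M.DSafe d ρ

/-- A finite history compatible with a strategy. -/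
def CompatHist (σ : Strat S A) (s : S) (steps : List (A × S)) : Prop :=
  M.ValidPath s steps ∧
    ∀ (i : ℕ) (h : i < steps.length), (steps.get ⟨i, h⟩).1 = σ (s, steps.take i)

def Memoryless (σ : Strat S A) : Prop :=
  ∀ h₁ h₂ : S × List (A × S), lastState h₁.1 h₁.2 = lastState h₂.1 h₂.2 → σ h₁ = σ h₂

/-- Cost of a run up to the first visit of `T` (∞ if `T` is never visited). -/
def reachCost (T : Set S) (ρ : ℕ → S × A) : ℕ∞ :=
  ⨅ i ∈ {i : ℕ | runState ρ i ∈ T}, (M.consAux (runState ρ 0) (prefixSteps ρ i) : ℕ∞)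

/-- `i`-step bounded reachability cost. -/
def reachCostBdd (T : Set S) (n : ℕ) (ρ : ℕ → S × A) : ℕ∞ :=
  ⨅ i ∈ {i : ℕ | i ≤ n ∧ runState ρ i ∈ T}, (M.consAux (runState ρ 0) (prefixSteps ρ i) : ℕ∞)

/-- Reachability cost requiring at least one step. -/
def reachCostPlus (T : Set S) (ρ : ℕ → S × A) : ℕ∞ :=
  ⨅ i ∈ {i : ℕ | 1 ≤ i ∧ runState ρ i ∈ T}, (M.consAux (runState ρ 0) (prefixSteps ρ i) : ℕ∞)

def reachCostStrat (T : Set S) (σ : Strat S A) (s : S) : ℕ∞ :=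
  ⨆ ρ ∈ {ρ | M.CompatFrom σ s ρ}, M.reachCost T ρ

def minReach (T : Set S) (s : S) : ℕ∞ :=
  ⨅ σ : Strat S A, M.reachCostStrat T σ s

def minReachBdd (T : Set S) (n : ℕ) (s : S) : ℕ∞ :=
  ⨅ σ : Strat S A, ⨆ ρ ∈ {ρ | M.CompatFrom σ s ρ}, M.reachCostBdd T n ρ

def minReachPlus (T : Set S) (s : S) : ℕ∞ :=
  ⨅ σ : Strat S A, ⨆ ρ ∈ {ρ | M.CompatFrom σ s ρ}, M.reachCostPlus T ρ

/-- The Bellman operator for minimum cost reachability of `T`. -/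
def bellman (T : Set S) (v : S → ℕ∞) : S → ℕ∞ := fun s =>
  if s ∈ T then 0 else ⨅ a : A, ((M.C s a : ℕ∞) + ⨆ t ∈ M.Succ s a, v t)

/-- The initial vector: `0` on `T`, `∞` elsewhere. -/
def xTvec (T : Set S) : S → ℕ∞ := fun s => if s ∈ T then 0 else ⊤

/-- Length of the longest simple path of `M`. -/
def longestSimple : ℕ :=
  sSup {n | ∃ (s : S) (steps : List (A × S)),
    M.ValidPath s steps ∧ (s :: steps.map Prod.snd).Nodup ∧ steps.length = n}

/-- The augmented CMDP `M̃` with a fresh non-reload copy of every state. -/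
def augment : CMDP (S ⊕ S) A where
  Δ := fun x a t =>
    Sum.elim (fun u => M.Δ (Sum.elim id id x) a u) (fun _ => (0 : NNReal)) t
  Δ_sum := by
    intro x a
    rw [Fintype.sum_sum_type]
    simp [M.Δ_sum (Sum.elim id id x) a]
  C := fun x a => M.C (Sum.elim id id x) a
  R := Sum.inl '' M.R
  cap := M.cap

/-- Truncation to `0` on reload states. -/
def strunc (x : S → ℕ∞) : S → ℕ∞ := fun s => if s ∈ M.R then 0 else x s

/-- The truncated Bellman-like operator `G`. -/
def opG (v : S → ℕ∞) : S → ℕ∞ := fun s =>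
  ⨅ a : A, ((M.C s a : ℕ∞) + ⨆ t ∈ M.Succ s a, M.strunc v t)

/-- Minimal `d ≤ cap` such that some strategy is `d`-safe in `s` (∞ if none). -/
def safeVec (s : S) : ℕ∞ :=
  ⨅ d ∈ {d : ℕ | d ≤ M.cap ∧ ∃ σ : Strat S A, M.SafeStrat σ d s}, (d : ℕ∞)

/-- An action safe in a state. -/
def SafeAction (s : S) (a : A) : Prop :=
  (s ∉ M.R ∧ ((M.C s a : ℕ∞) + ⨆ t ∈ M.Succ s a, M.safeVec t) ≤ M.safeVec s) ∨
  (s ∈ M.R ∧ ((M.C s a : ℕ∞) + ⨆ t ∈ M.Succ s a, M.safeVec t) ≤ (M.cap : ℕ∞))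

/-- A CMDP is decreasing if every (valid) simple cycle has positive consumption. -/
def Decreasing : Prop :=
  ∀ (s : S) (steps : List (A × S)), M.ValidPath s steps → steps ≠ [] →
    lastState s steps = s → (s :: (steps.map Prod.snd).dropLast).Nodup →
    0 < M.consAux s steps

/-- Selection according to a selection rule: the action of the largest
element of the domain below the counter value. -/
def selectFrom (φ : ℕ → Option A) (m : ℕ) (a₀ : A) : A :=
  (((List.range (m + 1)).reverse).findSome? φ).getD a₀

/-- The finite counter strategy `Σ^y` induced by a counter selector. -/
def counterStrategy (sel : S → ℕ → Option A) (y : S → ℕ) (a₀ : A) : Strat S A :=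
  fun h =>
    match M.energy (y h.1) h.1 h.2 with
    | some m => selectFrom (sel (lastState h.1 h.2)) m a₀
    | none => a₀

/-- The `SPR` value of an action. -/
def spr (s : S) (a : A) (x : S → ℕ∞) : ℕ∞ :=
  (M.C s a : ℕ∞) +
    ⨅ t ∈ M.Succ s a, max (x t) (⨆ t' ∈ {t' ∈ M.Succ s a | t' ≠ t}, M.safeVec t')

def opA (T : Set S) (x : S → ℕ∞) : S → ℕ∞ := fun s =>
  if s ∈ T then M.safeVec s else ⨅ a : A, M.spr s a x

/-- Two-sided truncation. -/
def trunc2 (x : S → ℕ∞) : S → ℕ∞ := fun s =>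
  if (M.cap : ℕ∞) < x s then ⊤ else if s ∈ M.R then 0 else x s

def opB (T : Set S) (x : S → ℕ∞) : S → ℕ∞ := M.trunc2 (M.opA T x)

def yTvec (T : Set S) : S → ℕ∞ := fun s => if s ∈ T then M.safeVec s else ⊤

def VisitsWithin (T : Set S) (i : ℕ) (ρ : ℕ → S × A) : Prop :=
  ∃ j ≤ i, runState ρ j ∈ T

def Visits (T : Set S) (ρ : ℕ → S × A) : Prop := ∃ j, runState ρ j ∈ T

/-- Minimal `ℓ ≤ cap` s.t. some `ℓ`-safe strategy from `s` has a run visiting `T`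
within the first `i` steps. -/
def safePRBdd (T : Set S) (i : ℕ) (s : S) : ℕ∞ :=
  ⨅ ℓ ∈ {ℓ : ℕ | ℓ ≤ M.cap ∧ ∃ σ : Strat S A, M.SafeStrat σ ℓ s ∧
      ∃ ρ, M.CompatFrom σ s ρ ∧ VisitsWithin T i ρ}, (ℓ : ℕ∞)

/-- Minimal `ℓ ≤ cap` s.t. some `ℓ`-safe strategy from `s` has a run visiting `T`. -/
def safePR (T : Set S) (s : S) : ℕ∞ :=
  ⨅ ℓ ∈ {ℓ : ℕ | ℓ ≤ M.cap ∧ ∃ σ : Strat S A, M.SafeStrat σ ℓ s ∧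
      ∃ ρ, M.CompatFrom σ s ρ ∧ Visits T ρ}, (ℓ : ℕ∞)

/-- Replace the set of reload states. -/
def setReload (R' : Set S) : CMDP S A := { M with R := R' }

/-- Probability of a finite continuation of a history under a strategy. -/
def pathProbAux (σ : Strat S A) : S × List (A × S) → List (A × S) → NNReal
  | _, [] => 1
  | h, (a, t) :: rest =>
      (if σ h = a then M.Δ (lastState h.1 h.2) a t else 0) *
        pathProbAux σ (h.1, h.2 ++ [(a, t)]) rest

/-- Probability that the length-`n` prefix of a run from `s` under `σ`
satisfies the predicate `P`. -/
def probEvent [Fintype A] (σ : Strat S A) (s : S) (n : ℕ) (P : List (A × S) → Prop) : NNReal :=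
  ∑ f : Fin n → A × S,
    if P (List.ofFn f) then M.pathProbAux σ (s, []) (List.ofFn f) else 0

/-- Number of visits of `T` along a finite path. -/
def visitCount (T : Set S) (s : S) (steps : List (A × S)) : ℕ :=
  (s :: steps.map Prod.snd).countP (fun x => decide (x ∈ T))

/-- `T` is visited infinitely often with probability one under `σ` from `s`. -/
def buchiAS [Fintype A] (σ : Strat S A) (s : S) (T : Set S) : Prop :=
  ∀ k : ℕ,
    (⨆ n : ℕ, M.probEvent σ s n (fun steps => k ≤ visitCount T s steps)) = 1

/-- Minimal `d ≤ cap` s.t. some strategy is `d`-safe in `s` and visits `T`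
infinitely often almost surely. -/
def safeBuchiVec [Fintype A] (T : Set S) (s : S) : ℕ∞ :=
  ⨅ d ∈ {d : ℕ | d ≤ M.cap ∧ ∃ σ : Strat S A, M.SafeStrat σ d s ∧ M.buchiAS σ s T}, (d : ℕ∞)

/-- Iterated memory update of a memory structure. -/
def updStar {Mem : Type} (upd : Mem → S → A → S → Mem) : Mem → S → List (A × S) → Mem
  | m, _, [] => m
  | m, s, (a, t) :: rest => updStar upd (upd m s a t) t rest

/-- Finite-memory strategies: encodable by a finite memory structure. -/
def FinMemStrategy (σ : Strat S A) : Prop :=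
  ∃ (Mem : Type) (_ : Finite Mem) (init : S → Mem) (upd : Mem → S → A → S → Mem)
    (nxt : Mem → S → A),
    ∀ h : S × List (A × S), σ h = nxt (updStar upd (init h.1) h.1 h.2) (lastState h.1 h.2)

/-- The joint run `α ⊙ ρ`. -/
def jointRun (s : S) (steps : List (A × S)) (ρ : ℕ → S × A) : ℕ → S × A :=
  fun i => if h : i < steps.length then (stateAt s steps i, (steps.get ⟨i, h⟩).1)
           else ρ (i - steps.length)

end CMDP

section MLProof
open CMDP

lemma mlaux_exists_eq_iInf {ι : Sort*} [Nonempty ι] (f : ι → ℕ∞) : ∃ i, f i = ⨅ j, f j := by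
  by_cases h : (⨅ j, f j) = ⊤
  · refine ⟨Classical.arbitrary ι, le_antisymm ?_ (iInf_le _ _)⟩
    rw [h]; exact le_top
  · have hlt : (⨅ j, f j) < (⨅ j, f j) + 1 := (ENat.lt_add_one_iff h).2 le_rfl
    obtain ⟨i, hi⟩ := iInf_lt_iff.1 hlt
    exact ⟨i, le_antisymm ((ENat.lt_add_one_iff h).1 hi) (iInf_le _ i)⟩

lemma mlaux_exists_eq_biInf {α : Type*} {P : α → Prop} (h : ∃ i, P i) (f : α → ℕ∞) :
    ∃ i, P i ∧ f i = ⨅ j ∈ {j | P j}, f j := by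
  have : Nonempty {i // P i} := nonempty_subtype.2 h
  obtain ⟨⟨i, hi⟩, heq⟩ := mlaux_exists_eq_iInf (fun x : {j // P j} => f x.1)
  refine ⟨i, hi, ?_⟩
  rw [show (⨅ j ∈ {j | P j}, f j) = ⨅ x : {j // P j}, f x.1 by
    rw [iInf_subtype]; rfl]
  exact heq

lemma mlaux_add_biInf (c : ℕ∞) (P : ℕ → Prop) (f : ℕ → ℕ∞) :
    c + ⨅ i ∈ {i | P i}, f i = ⨅ i ∈ {i | P i}, (c + f i) := by
  by_cases h : ∃ i, P i
  · refine le_antisymm (le_iInf₂ fun i hi => add_le_add_right (iInf₂_le i hi) c) ?_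
    obtain ⟨i, hi, heq⟩ := mlaux_exists_eq_biInf h f
    rw [← heq]
    exact iInf₂_le i hi
  · have h1 : {i | P i} = (∅ : Set ℕ) := by
      ext i; simp only [Set.mem_setOf_eq, Set.mem_empty_iff_false, iff_false]
      exact fun hi => h ⟨i, hi⟩
    rw [h1]; simp

lemma mlaux_biInf_shift {P : ℕ → Prop} (h0 : ¬ P 0) (f : ℕ → ℕ∞) :
    ⨅ i ∈ {i | P i}, f i = ⨅ j ∈ {j | P (j + 1)}, f (j + 1) := by
  refine le_antisymm (le_iInf₂ fun j hj => iInf₂_le (j + 1) hj) (le_iInf₂ fun i hi => ?_)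
  match i with
  | 0 => exact absurd hi h0
  | j + 1 => exact iInf₂_le j (by exact hi)

variable {S A : Type} [Fintype S] [Nonempty A]

/-! ### Basic list/run lemmas -/

lemma mlLastState_append (s : S) (l₁ l₂ : List (A × S)) :
    lastState s (l₁ ++ l₂) = lastState (lastState s l₁) l₂ := by
  induction l₁ generalizing s with
  | nil => rfl
  | cons p rest ih => cases p; simp [lastState, ih]

lemma mlLastState_snoc (s : S) (l : List (A × S)) (a : A) (t : S) :
    lastState s (l ++ [(a, t)]) = t := by
  rw [mlLastState_append]; rfl

lemma mlPrefixSteps_zero (ρ : ℕ → S × A) : prefixSteps ρ 0 = [] := by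
  simp [prefixSteps]

lemma mlPrefixSteps_succ (ρ : ℕ → S × A) (n : ℕ) :
    prefixSteps ρ (n + 1) = prefixSteps ρ n ++ [((ρ n).2, (ρ (n + 1)).1)] := by
  simp [prefixSteps, List.range_succ]

/-- Prepend one step to a run. -/
def mlConsRun (p : S × A) (ρ : ℕ → S × A) : ℕ → S × A :=
  fun n => match n with
  | 0 => p
  | n + 1 => ρ n

lemma mlPrefixSteps_consRun (p : S × A) (ρ : ℕ → S × A) (i : ℕ) :
    prefixSteps (mlConsRun p ρ) (i + 1) = (p.2, (ρ 0).1) :: prefixSteps ρ i := by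
  simp only [prefixSteps, List.range_succ_eq_map, List.map_cons, List.map_map]
  rfl

variable (M : CMDP S A)

lemma mlConsAux_append (s : S) (l₁ l₂ : List (A × S)) :
    M.consAux s (l₁ ++ l₂) = M.consAux s l₁ + M.consAux (lastState s l₁) l₂ := by
  induction l₁ generalizing s with
  | nil => simp [CMDP.consAux, lastState]
  | cons p rest ih => cases p; simp [CMDP.consAux, lastState, ih, Nat.add_assoc]

lemma mlLastState_prefixSteps (ρ : ℕ → S × A) (n : ℕ) :
    lastState (runState ρ 0) (prefixSteps ρ n) = runState ρ n := by
  induction n with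
  | zero => rfl
  | succ n ih => rw [mlPrefixSteps_succ, mlLastState_snoc]; rfl

lemma mlSucc_nonempty (u : S) (a : A) : ∃ t, t ∈ M.Succ u a := by
  by_contra h
  push_neg at h
  have hz : ∀ t, M.Δ u a t = 0 := by
    intro t
    have := h t
    simp only [CMDP.Succ, Set.mem_setOf_eq, not_lt, le_zero_iff] at this
    exact this
  have := M.Δ_sum u a
  rw [Finset.sum_eq_zero (fun t _ => hz t)] at this
  exact one_ne_zero this.symm

/-- Any step-by-step construction of histories yields a compatible run. -/
lemma mlRun_of_hist (τ : Strat S A) (u : S) (hist : ℕ → List (A × S))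
    (h0 : hist 0 = [])
    (hstep : ∀ n, ∃ t, t ∈ M.Succ (lastState u (hist n)) (τ (u, hist n)) ∧
      hist (n + 1) = hist n ++ [(τ (u, hist n), t)]) :
    ∃ ρ, M.CompatFrom τ u ρ ∧ ∀ n, runState ρ n = lastState u (hist n) := by
  classical
  set ρ : ℕ → S × A := fun n => (lastState u (hist n), τ (u, hist n)) with hρ
  have hrs : ∀ n, runState ρ n = lastState u (hist n) := fun n => rfl
  have hpre : ∀ n, prefixSteps ρ n = hist n := by
    intro n
    induction n with
    | zero => rw [mlPrefixSteps_zero, h0]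
    | succ n ih =>
      obtain ⟨t, _, hh⟩ := hstep n
      have h2 : (ρ (n + 1)).1 = t := by
        show lastState u (hist (n + 1)) = t
        rw [hh, mlLastState_snoc]
      rw [mlPrefixSteps_succ, ih, hh, h2]
  have hrun : M.IsRun ρ := by
    intro i
    obtain ⟨t, hmem, hh⟩ := hstep i
    show (lastState u (hist (i + 1))) ∈ M.Succ (lastState u (hist i)) (τ (u, hist i))
    rw [hh, mlLastState_snoc]
    exact hmem
  have hu0 : runState ρ 0 = u := by rw [hrs 0, h0]; rfl
  refine ⟨ρ, ⟨⟨hrun, ?_⟩, hu0⟩, hrs⟩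
  intro i
  show τ (u, hist i) = τ (runState ρ 0, prefixSteps ρ i)
  rw [hu0, hpre]

lemma mlExists_compatFrom (τ : Strat S A) (u : S) : ∃ ρ, M.CompatFrom τ u ρ := by
  classical
  have pick : ∀ v a, {t : S // t ∈ M.Succ v a} := fun v a =>
    ⟨Classical.choose (mlSucc_nonempty M v a), Classical.choose_spec (mlSucc_nonempty M v a)⟩
  let hist : ℕ → List (A × S) := fun n =>
    Nat.rec [] (fun _ l => l ++ [(τ (u, l), (pick (lastState u l) (τ (u, l))).1)]) n
  obtain ⟨ρ, hρ, _⟩ := mlRun_of_hist M τ u hist rfl (fun n =>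
    ⟨(pick (lastState u (hist n)) (τ (u, hist n))).1,
      (pick (lastState u (hist n)) (τ (u, hist n))).2, rfl⟩)
  exact ⟨ρ, hρ⟩

/-! ### Residual values -/

/-- The strategy that behaves like `σ` after the history `(s, l)`. -/
def mlStratAfter (σ : Strat S A) (s : S) (l : List (A × S)) : Strat S A :=
  fun h => σ (s, l ++ h.2)

variable (T : Set S)

/-- Residual value of a strategy after a history. -/
noncomputable def mlResid (σ : Strat S A) (s : S) (l : List (A × S)) : ℕ∞ :=
  M.reachCostStrat T (mlStratAfter σ s l) (lastState s l)

lemma mlMinReach_le_resid (σ : Strat S A) (s : S) (l : List (A × S)) :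
    M.minReach T (lastState s l) ≤ mlResid M T σ s l :=
  iInf_le _ _

lemma mlResid_nil (σ : Strat S A) (s : S) :
    mlResid M T σ s [] = M.reachCostStrat T σ s := by
  have hset : {ρ | M.CompatFrom (mlStratAfter σ s []) s ρ} = {ρ | M.CompatFrom σ s ρ} := by
    ext ρ
    simp only [Set.mem_setOf_eq, CMDP.CompatFrom, CMDP.Compat]
    constructor
    · rintro ⟨⟨h1, h2⟩, h3⟩
      exact ⟨⟨h1, fun i => by rw [h2 i]; simp [mlStratAfter, h3]⟩, h3⟩
    · rintro ⟨⟨h1, h2⟩, h3⟩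
      exact ⟨⟨h1, fun i => by rw [h2 i]; simp [mlStratAfter, h3]⟩, h3⟩
  have hls : lastState s ([] : List (A × S)) = s := rfl
  unfold mlResid CMDP.reachCostStrat
  rw [hls, hset]

lemma mlReachCost_consRun (u : S) (a : A) (ρ' : ℕ → S × A) (hu : u ∉ T) :
    M.reachCost T (mlConsRun (u, a) ρ') = (M.C u a : ℕ∞) + M.reachCost T ρ' := by
  unfold CMDP.reachCost
  have h0 : ¬ runState (mlConsRun (u, a) ρ') 0 ∈ T := hu
  rw [mlaux_biInf_shift h0, mlaux_add_biInf]
  apply le_antisymm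
  · refine le_iInf₂ fun j hj => ?_
    refine le_trans (iInf₂_le j (by exact hj)) (le_of_eq ?_)
    rw [mlPrefixSteps_consRun]
    show ((M.C u a + M.consAux (ρ' 0).1 (prefixSteps ρ' j) : ℕ) : ℕ∞) = _
    push_cast
    rfl
  · refine le_iInf₂ fun j hj => ?_
    refine le_trans (iInf₂_le j (by exact hj)) (le_of_eq ?_)
    rw [mlPrefixSteps_consRun]
    show _ = ((M.C u a + M.consAux (ρ' 0).1 (prefixSteps ρ' j) : ℕ) : ℕ∞)
    push_cast
    rfl

lemma mlCompat_consRun (σ : Strat S A) (s : S) (l : List (A × S)) (t : S)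
    (ht : t ∈ M.Succ (lastState s l) (σ (s, l))) (ρ' : ℕ → S × A)
    (h : M.CompatFrom (mlStratAfter σ s (l ++ [(σ (s, l), t)])) t ρ') :
    M.CompatFrom (mlStratAfter σ s l) (lastState s l)
      (mlConsRun (lastState s l, σ (s, l)) ρ') := by
  obtain ⟨⟨hrun, hact⟩, hstart⟩ := h
  set u := lastState s l with hu
  set a := σ (s, l) with ha
  have hrs0 : (ρ' 0).1 = t := hstart
  refine ⟨⟨?_, ?_⟩, rfl⟩
  · intro i
    match i with
    | 0 =>
      show (ρ' 0).1 ∈ M.Succ u a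
      rw [hrs0]; exact ht
    | i + 1 =>
      exact hrun i
  · intro i
    match i with
    | 0 =>
      show a = mlStratAfter σ s l (_, prefixSteps (mlConsRun (u, a) ρ') 0)
      rw [mlPrefixSteps_zero]
      show a = σ (s, l ++ [])
      rw [List.append_nil]
    | i + 1 =>
      show (ρ' i).2 = mlStratAfter σ s l (_, prefixSteps (mlConsRun (u, a) ρ') (i + 1))
      rw [mlPrefixSteps_consRun, hrs0]
      show (ρ' i).2 = σ (s, l ++ (a, t) :: prefixSteps ρ' i)
      rw [hact i, hstart]
      show mlStratAfter σ s (l ++ [(a, t)]) (t, prefixSteps ρ' i) = _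
      show σ (s, (l ++ [(a, t)]) ++ prefixSteps ρ' i) = _
      rw [List.append_assoc]
      rfl

lemma mlResid_step (σ : Strat S A) (s : S) (l : List (A × S))
    (hu : lastState s l ∉ T) (t : S) (ht : t ∈ M.Succ (lastState s l) (σ (s, l))) :
    (M.C (lastState s l) (σ (s, l)) : ℕ∞) + mlResid M T σ s (l ++ [(σ (s, l), t)])
      ≤ mlResid M T σ s l := by
  set u := lastState s l with hu'
  set a := σ (s, l) with ha'
  have hlast : lastState s (l ++ [(a, t)]) = t := mlLastState_snoc s l a t
  show (M.C u a : ℕ∞) +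
      M.reachCostStrat T (mlStratAfter σ s (l ++ [(a, t)])) (lastState s (l ++ [(a, t)])) ≤ _
  rw [hlast]
  unfold CMDP.reachCostStrat
  have hne : {ρ | M.CompatFrom (mlStratAfter σ s (l ++ [(a, t)])) t ρ}.Nonempty :=
    mlExists_compatFrom M (mlStratAfter σ s (l ++ [(a, t)])) t
  rw [ENat.add_biSup hne]
  refine iSup₂_le fun ρ' hρ' => ?_
  rw [← mlReachCost_consRun M T u a ρ' hu]
  exact le_iSup₂ (f := fun ρ _ => M.reachCost T ρ) (mlConsRun (u, a) ρ')
    (mlCompat_consRun M σ s l t ht ρ' hρ')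

/-! ### Good actions -/

/-- An action realizing the Bellman inequality at `u`. -/
def mlGoodAct (a : A) (u : S) : Prop :=
  (M.C u a : ℕ∞) + ⨆ t ∈ M.Succ u a, M.minReach T t ≤ M.minReach T u

lemma mlExists_goodAct (u : S) (hu : u ∉ T) : ∃ a, mlGoodAct M T a u := by
  obtain ⟨σ₀, hσ₀⟩ := mlaux_exists_eq_iInf (fun σ : Strat S A => M.reachCostStrat T σ u)
  refine ⟨σ₀ (u, []), ?_⟩
  unfold mlGoodAct
  have hval : M.reachCostStrat T σ₀ u = M.minReach T u := hσ₀
  have hne : (M.Succ u (σ₀ (u, []))).Nonempty := mlSucc_nonempty M u (σ₀ (u, []))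
  rw [ENat.add_biSup hne]
  refine iSup₂_le fun t ht => ?_
  have h1 : M.minReach T t ≤ mlResid M T σ₀ u ([] ++ [(σ₀ (u, []), t)]) := by
    have := mlMinReach_le_resid M T σ₀ u ([] ++ [(σ₀ (u, []), t)])
    rwa [mlLastState_snoc] at this
  have h2 := mlResid_step M T σ₀ u [] hu t ht
  calc (M.C u (σ₀ (u, [])) : ℕ∞) + M.minReach T t
      ≤ (M.C u (σ₀ (u, [])) : ℕ∞) + mlResid M T σ₀ u ([] ++ [(σ₀ (u, []), t)]) :=
        add_le_add_right h1 _
    _ ≤ mlResid M T σ₀ u [] := h2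
    _ = M.minReach T u := by rw [mlResid_nil M T σ₀ u, hval]

/-- The escape rank predicate. -/
def mlEsc : ℕ → S → Prop
  | 0, u => ∃ a, mlGoodAct M T a u ∧ ∀ t ∈ M.Succ u a,
      ¬(M.C u a = 0 ∧ M.minReach T t = M.minReach T u ∧ t ∉ T)
  | n + 1, u => ∃ a, mlGoodAct M T a u ∧ ∀ t ∈ M.Succ u a,
      (M.C u a = 0 ∧ M.minReach T t = M.minReach T u ∧ t ∉ T) → mlEsc n t

lemma mlEsc_succ_of (n : ℕ) : ∀ u, mlEsc M T n u → mlEsc M T (n + 1) u := by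
  induction n with
  | zero =>
    rintro u ⟨a, h1, h2⟩
    exact ⟨a, h1, fun t ht hc => absurd hc (h2 t ht)⟩
  | succ n ih =>
    rintro u ⟨a, h1, h2⟩
    exact ⟨a, h1, fun t ht hc => ih t (h2 t ht hc)⟩

lemma mlEsc_mono {n m : ℕ} (h : n ≤ m) {u : S} (he : mlEsc M T n u) : mlEsc M T m u := by
  induction h with
  | refl => exact he
  | step _ ih => exact mlEsc_succ_of M T _ _ ih

lemma mlEsc_elim {n : ℕ} {u : S} (h : mlEsc M T n u) :
    ∃ a, mlGoodAct M T a u ∧ ∀ t ∈ M.Succ u a,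
      (M.C u a = 0 ∧ M.minReach T t = M.minReach T u ∧ t ∉ T) →
        ∃ m, m < n ∧ mlEsc M T m t := by
  match n with
  | 0 =>
    obtain ⟨a, h1, h2⟩ := h
    exact ⟨a, h1, fun t ht hc => absurd hc (h2 t ht)⟩
  | n + 1 =>
    obtain ⟨a, h1, h2⟩ := h
    exact ⟨a, h1, fun t ht hc => ⟨n, Nat.lt_succ_self n, h2 t ht hc⟩⟩


lemma mlExists_esc (u : S) (hu : u ∉ T) (hv : M.minReach T u ≠ ⊤) : ∃ n, mlEsc M T n u := by
  classical
  by_contra hU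
  set c := M.minReach T u with hc
  have hUstep : ∀ v, M.minReach T v = c → (¬∃ n, mlEsc M T n v) → ∀ a, mlGoodAct M T a v →
      ∃ t ∈ M.Succ v a, (M.C v a = 0 ∧ M.minReach T t = M.minReach T v ∧ t ∉ T) ∧
        ¬∃ m, mlEsc M T m t := by
    intro v hvc hvE a ha
    by_contra hcon
    have hcon' : ∀ t ∈ M.Succ v a,
        (M.C v a = 0 ∧ M.minReach T t = M.minReach T v ∧ t ∉ T) → ∃ m, mlEsc M T m t := by
      intro t ht hcnd
      by_contra hblah
      exact hcon ⟨t, ht, hcnd, hblah⟩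
    set F : S → ℕ := fun t => if h : ∃ m, mlEsc M T m t then h.choose else 0 with hF
    have hFspec : ∀ t, (∃ m, mlEsc M T m t) → mlEsc M T (F t) t := by
      intro t h
      simp only [hF, dif_pos h]
      exact h.choose_spec
    apply hvE
    refine ⟨(Finset.univ.sup F) + 1, a, ha, fun t ht hcnd => ?_⟩
    exact mlEsc_mono M T (Finset.le_sup (Finset.mem_univ t)) (hFspec t (hcon' t ht hcnd))
  obtain ⟨σ₀, hσ₀⟩ := mlaux_exists_eq_iInf (fun σ : Strat S A => M.reachCostStrat T σ u)
  have hσval : M.reachCostStrat T σ₀ u = c := hσ₀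
  set P : List (A × S) → Prop := fun l =>
    M.minReach T (lastState u l) = c ∧ lastState u l ∉ T ∧
      (¬∃ n, mlEsc M T n (lastState u l)) ∧ mlResid M T σ₀ u l ≤ c with hP
  have hP0 : P [] := by
    refine ⟨hc.symm ▸ rfl, hu, hU, ?_⟩
    rw [mlResid_nil M T σ₀ u, hσval]
  have hPstep : ∀ l, P l →
      ∃ t, t ∈ M.Succ (lastState u l) (σ₀ (u, l)) ∧ P (l ++ [(σ₀ (u, l), t)]) := by
    intro l hl
    obtain ⟨h1, h2, h3, h4⟩ := hl
    have hge : c ≤ mlResid M T σ₀ u l := h1 ▸ mlMinReach_le_resid M T σ₀ u l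
    have hres : mlResid M T σ₀ u l = c := le_antisymm h4 hge
    have hgood : mlGoodAct M T (σ₀ (u, l)) (lastState u l) := by
      unfold mlGoodAct
      have hne : (M.Succ (lastState u l) (σ₀ (u, l))).Nonempty :=
        mlSucc_nonempty M (lastState u l) (σ₀ (u, l))
      rw [ENat.add_biSup hne]
      refine iSup₂_le fun t ht => ?_
      have ha := mlResid_step M T σ₀ u l h2 t ht
      have hb : M.minReach T t ≤ mlResid M T σ₀ u (l ++ [(σ₀ (u, l), t)]) := by
        have := mlMinReach_le_resid M T σ₀ u (l ++ [(σ₀ (u, l), t)])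
        rwa [mlLastState_snoc] at this
      calc (M.C (lastState u l) (σ₀ (u, l)) : ℕ∞) + M.minReach T t
          ≤ (M.C (lastState u l) (σ₀ (u, l)) : ℕ∞) +
              mlResid M T σ₀ u (l ++ [(σ₀ (u, l), t)]) := add_le_add_right hb _
        _ ≤ mlResid M T σ₀ u l := ha
        _ = M.minReach T (lastState u l) := by rw [hres, h1]
    obtain ⟨t, ht, hcnd, htE⟩ := hUstep (lastState u l) h1 h3 (σ₀ (u, l)) hgood
    obtain ⟨hC0, hVt, htT⟩ := hcnd
    have hstep := mlResid_step M T σ₀ u l h2 t ht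
    rw [hC0] at hstep
    simp only [Nat.cast_zero, zero_add] at hstep
    have hlast : lastState u (l ++ [(σ₀ (u, l), t)]) = t := mlLastState_snoc u l _ t
    refine ⟨t, ht, ?_, ?_, ?_, le_trans hstep h4⟩
    · rw [hlast, hVt, h1]
    · rw [hlast]; exact htT
    · rw [hlast]; exact htE
  let next : {l // P l} → {l // P l} := fun x =>
    ⟨x.1 ++ [(σ₀ (u, x.1), (hPstep x.1 x.2).choose)], ((hPstep x.1 x.2).choose_spec).2⟩
  let histP : ℕ → {l // P l} := fun n => Nat.rec ⟨[], hP0⟩ (fun _ x => next x) n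
  obtain ⟨ρ, hρ, hstates⟩ := mlRun_of_hist M σ₀ u (fun n => (histP n).1) rfl (fun n =>
    ⟨(hPstep (histP n).1 (histP n).2).choose,
      (hPstep (histP n).1 (histP n).2).choose_spec.1, rfl⟩)
  have htop : M.reachCost T ρ = ⊤ := by
    refine le_antisymm le_top (le_iInf fun i => le_iInf fun hi => ?_)
    have : runState ρ i ∈ T := hi
    rw [hstates i] at this
    exact absurd this (histP i).2.2.1
  have hle : (⊤ : ℕ∞) ≤ M.reachCostStrat T σ₀ u := by
    rw [← htop]
    exact le_iSup₂ (f := fun ρ _ => M.reachCost T ρ) ρ hρ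
  rw [hσval] at hle
  exact hv (top_le_iff.1 hle).symm.symm

/-- The escape rank. -/
noncomputable def mlRank (u : S) : ℕ := sInf {n | mlEsc M T n u}

lemma mlAct_exists (u : S) (h1 : u ∉ T) (h2 : M.minReach T u ≠ ⊤) :
    ∃ a, mlGoodAct M T a u ∧ ∀ t ∈ M.Succ u a,
      (M.C u a = 0 ∧ M.minReach T t = M.minReach T u ∧ t ∉ T) →
        mlRank M T t < mlRank M T u := by
  have hne : {n | mlEsc M T n u}.Nonempty := mlExists_esc M T u h1 h2
  have hmem : mlEsc M T (mlRank M T u) u := Nat.sInf_mem hne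
  obtain ⟨a, hg, hstep⟩ := mlEsc_elim M T hmem
  refine ⟨a, hg, fun t ht hcnd => ?_⟩
  obtain ⟨m, hm, hesc⟩ := hstep t ht hcnd
  exact lt_of_le_of_lt (Nat.sInf_le hesc) hm

/-- The optimal memoryless choice of action. -/
noncomputable def mlAct (u : S) : A :=
  if h : u ∉ T ∧ M.minReach T u ≠ ⊤ then (mlAct_exists M T u h.1 h.2).choose
  else Classical.arbitrary A

lemma mlAct_spec (u : S) (h1 : u ∉ T) (h2 : M.minReach T u ≠ ⊤) :
    mlGoodAct M T (mlAct M T u) u ∧ ∀ t ∈ M.Succ u (mlAct M T u),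
      (M.C u (mlAct M T u) = 0 ∧ M.minReach T t = M.minReach T u ∧ t ∉ T) →
        mlRank M T t < mlRank M T u := by
  have h : u ∉ T ∧ M.minReach T u ≠ ⊤ := ⟨h1, h2⟩
  have : mlAct M T u = (mlAct_exists M T u h.1 h.2).choose := dif_pos h
  rw [this]
  exact (mlAct_exists M T u h.1 h.2).choose_spec

end MLProof

open CMDP in
/-- There exists a memoryless strategy optimal for minimum-cost reachability. -/
theorem exists_memoryless_optimal {S A : Type} [Fintype S] [Nonempty A]
    (M : CMDP S A) (T : Set S) :
    ∃ σ : Strat S A, Memoryless σ ∧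
      ∀ s : S, M.reachCostStrat T σ s = M.minReach T s := by
  classical
  refine ⟨fun h => mlAct M T (lastState h.1 h.2),
    fun h₁ h₂ hl => congrArg (mlAct M T) hl, fun s => ?_⟩
  refine le_antisymm ?_ (iInf_le _ _)
  refine iSup₂_le fun ρ hρ => ?_
  by_cases hVs : M.minReach T s = ⊤
  · rw [hVs]; exact le_top
  obtain ⟨⟨hrun, hact⟩, hstart⟩ := hρ
  have hak : ∀ k, (ρ k).2 = mlAct M T (runState ρ k) := by
    intro k
    rw [hact k]
    show mlAct M T (lastState (runState ρ 0) (prefixSteps ρ k)) = _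
    rw [mlLastState_prefixSteps]
  have hsucc : ∀ k, runState ρ (k + 1) ∈ M.Succ (runState ρ k) (mlAct M T (runState ρ k)) := by
    intro k
    have h := hrun k
    rw [hak k] at h
    exact h
  have hcons : ∀ k, (M.consAux s (prefixSteps ρ (k + 1)) : ℕ∞) =
      (M.consAux s (prefixSteps ρ k) : ℕ∞) +
        (M.C (runState ρ k) (mlAct M T (runState ρ k)) : ℕ∞) := by
    intro k
    rw [mlPrefixSteps_succ, mlConsAux_append]
    have hl : lastState s (prefixSteps ρ k) = runState ρ k := by
      rw [← hstart]; exact mlLastState_prefixSteps ρ k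
    rw [hl, hak k]
    show ((M.consAux s (prefixSteps ρ k) +
      (M.C (runState ρ k) (mlAct M T (runState ρ k)) + 0) : ℕ) : ℕ∞) = _
    push_cast
    ring
  have hcons0 : (M.consAux s (prefixSteps ρ 0) : ℕ∞) = 0 := by
    rw [mlPrefixSteps_zero]
    show ((0 : ℕ) : ℕ∞) = 0
    norm_num
  have Inv : ∀ k, (∀ j, j < k → runState ρ j ∉ T) →
      (M.consAux s (prefixSteps ρ k) : ℕ∞) ≤ M.minReach T s ∧
      (runState ρ k ∉ T →
        (M.consAux s (prefixSteps ρ k) : ℕ∞) + M.minReach T (runState ρ k) ≤ M.minReach T s) := by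
    intro k
    induction k with
    | zero =>
      intro _
      constructor
      · rw [hcons0]; exact zero_le
      · intro _
        rw [hcons0, zero_add, hstart]
    | succ k ih =>
      intro hj
      have hjk : ∀ j, j < k → runState ρ j ∉ T := fun j h => hj j (h.trans (Nat.lt_succ_self k))
      have hukT : runState ρ k ∉ T := hj k (Nat.lt_succ_self k)
      have hIH := (ih hjk).2 hukT
      have hfin : M.minReach T (runState ρ k) ≠ ⊤ := by
        intro htop
        rw [htop, add_top] at hIH
        exact hVs (top_le_iff.1 hIH)
      have hgood := (mlAct_spec M T (runState ρ k) hukT hfin).1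
      have hCV : (M.C (runState ρ k) (mlAct M T (runState ρ k)) : ℕ∞) +
          M.minReach T (runState ρ (k + 1)) ≤ M.minReach T (runState ρ k) := by
        refine le_trans (add_le_add_right ?_ _) hgood
        exact le_iSup₂ (f := fun t (_ : t ∈ M.Succ (runState ρ k) (mlAct M T (runState ρ k))) =>
          M.minReach T t) (runState ρ (k + 1)) (hsucc k)
      have hmain : (M.consAux s (prefixSteps ρ (k + 1)) : ℕ∞) +
          M.minReach T (runState ρ (k + 1)) ≤ M.minReach T s := by
        rw [hcons k, add_assoc]
        exact le_trans (add_le_add_right hCV _) hIH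
      exact ⟨le_trans le_self_add hmain, fun _ => hmain⟩
  have hT : ∃ k, runState ρ k ∈ T := by
    by_contra hno
    push_neg at hno
    have hbound : ∀ k, (M.consAux s (prefixSteps ρ k) : ℕ∞) +
        M.minReach T (runState ρ k) ≤ M.minReach T s :=
      fun k => (Inv k (fun j _ => hno j)).2 (hno k)
    have hfin : ∀ k, M.minReach T (runState ρ k) ≠ ⊤ := by
      intro k htop
      have := hbound k
      rw [htop, add_top] at this
      exact hVs (top_le_iff.1 this)
    have hgood : ∀ k, mlGoodAct M T (mlAct M T (runState ρ k)) (runState ρ k) :=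
      fun k => (mlAct_spec M T (runState ρ k) (hno k) (hfin k)).1
    have hCV : ∀ k, (M.C (runState ρ k) (mlAct M T (runState ρ k)) : ℕ∞) +
        M.minReach T (runState ρ (k + 1)) ≤ M.minReach T (runState ρ k) := by
      intro k
      refine le_trans (add_le_add_right ?_ _) (hgood k)
      exact le_iSup₂ (f := fun t (_ : t ∈ M.Succ (runState ρ k) (mlAct M T (runState ρ k))) =>
        M.minReach T t) (runState ρ (k + 1)) (hsucc k)
    set v : ℕ → ℕ := fun k => (M.minReach T (runState ρ k)).toNat with hv
    have hvc : ∀ k, M.minReach T (runState ρ k) = (v k : ℕ∞) :=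
      fun k => (ENat.coe_toNat (hfin k)).symm
    have keyN : ∀ k, M.C (runState ρ k) (mlAct M T (runState ρ k)) + v (k + 1) ≤ v k := by
      intro k
      have h := hCV k
      rw [hvc k, hvc (k + 1)] at h
      exact_mod_cast h
    have hstepv : ∀ k, v (k + 1) ≤ v k := fun k => by have := keyN k; omega
    have hmono : ∀ j k, j ≤ k → v k ≤ v j := by
      intro j k h
      induction h with
      | refl => exact le_rfl
      | @step m _ ih => exact le_trans (hstepv m) ih
    have hne : (Set.range v).Nonempty := ⟨v 0, 0, rfl⟩
    obtain ⟨K, hK⟩ := Nat.sInf_mem hne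
    have hconst : ∀ k, K ≤ k → v k = v K := by
      intro k h
      have h1 : v k ≤ v K := hmono K k h
      have h2 : sInf (Set.range v) ≤ v k := Nat.sInf_le ⟨k, rfl⟩
      omega
    have hC0 : ∀ k, K ≤ k → M.C (runState ρ k) (mlAct M T (runState ρ k)) = 0 := by
      intro k h
      have h1 := keyN k
      have h2 := hconst k h
      have h3 := hconst (k + 1) (h.trans (Nat.le_succ k))
      omega
    have hVeq : ∀ k, K ≤ k →
        M.minReach T (runState ρ (k + 1)) = M.minReach T (runState ρ k) := by
      intro k h
      rw [hvc k, hvc (k + 1), hconst k h, hconst (k + 1) (h.trans (Nat.le_succ k))]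
    have hrank : ∀ k, K ≤ k →
        mlRank M T (runState ρ (k + 1)) < mlRank M T (runState ρ k) := by
      intro k h
      exact (mlAct_spec M T (runState ρ k) (hno k) (hfin k)).2 (runState ρ (k + 1)) (hsucc k)
        ⟨hC0 k h, hVeq k h, hno (k + 1)⟩
    have hdesc : ∀ j, mlRank M T (runState ρ (K + j)) + j ≤ mlRank M T (runState ρ K) := by
      intro j
      induction j with
      | zero => simp
      | succ j ih =>
        have := hrank (K + j) (Nat.le_add_right K j)
        have h2 : K + (j + 1) = (K + j) + 1 := by omega
        rw [h2]
        omega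
    have := hdesc (mlRank M T (runState ρ K) + 1)
    omega
  have hk₀T : runState ρ (Nat.find hT) ∈ T := Nat.find_spec hT
  have hk₀min : ∀ j, j < Nat.find hT → runState ρ j ∉ T := fun j h => Nat.find_min hT h
  have h1 : M.reachCost T ρ ≤ (M.consAux s (prefixSteps ρ (Nat.find hT)) : ℕ∞) := by
    unfold CMDP.reachCost
    rw [hstart]
    exact iInf₂_le (Nat.find hT) hk₀T
  exact le_trans h1 (Inv (Nat.find hT) hk₀min).1
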